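/- Let γ be a path in [n]×[k] with γ(i) = (a_i, b_i), and let 0 < r ≤ k. Let ε_r be the least index with b_{ε_r} = r, and let u_r be the least index with a_{u_r} = a_{ε_r} (so 0 ≤ u_r < ε_r). Let α : [ℓ] → [n+k] and β : [m] → [k] be injective monotone maps such that: (1) ε_r is not in the image of α; (2) 0 is in the image of α; (3) n+k is in the image of α unless ε_r = n+k; (4) some index j with u_r ≤ j < ε_r lies in the image of α; (5) 0 and r lie in the image of β; (6) β(x) ≤ r for all x. Then there exist p ≥ 0, a path τ in [ℓ]×[m], a surjective monotone map s : [ℓ+m] → [ℓ+p], and an injective monotone map α̂ : [ℓ+p] → [n+k] whose image contains both ε_r and the image of α, such that for all (i,j) ∈ [ℓ+m]×[m] one has E_γ((α × β)(E_τ(i,j))) = E_γ(α̂(s(i)), β(j)). -/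

import Mathlib

/-- `γ` is a path in `[n] × [k]` (a simplex of maximal dimension of `Δⁿ × Δᵏ`):
it starts at `(0,0)`, ends at `(n,k)`, and each step increases exactly one
coordinate by exactly `1`.  The parameter `m` records the length of the path;
necessarily `m = n + k`. -/
def IsPath (n k m : ℕ) (γ : Fin (m + 1) → Fin (n + 1) × Fin (k + 1)) : Prop :=
  γ 0 = (0, 0) ∧
  γ (Fin.last m) = (Fin.last n, Fin.last k) ∧
  ∀ i : Fin m,
    (((γ i.succ).1 : ℕ) = ((γ i.castSucc).1 : ℕ) + 1 ∧ (γ i.succ).2 = (γ i.castSucc).2) ∨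
    ((γ i.succ).1 = (γ i.castSucc).1 ∧ ((γ i.succ).2 : ℕ) = ((γ i.castSucc).2 : ℕ) + 1)

/-- The extension `E_γ : [n+k] × [k] → [n] × [k]` of a path `γ`, given by
`E_γ(i, j) = (a_i, max (b_i) j)` where `γ i = (a_i, b_i)`. -/
def pathExt (n k m : ℕ) (γ : Fin (m + 1) → Fin (n + 1) × Fin (k + 1)) :
    Fin (m + 1) × Fin (k + 1) → Fin (n + 1) × Fin (k + 1) :=
  fun p => ((γ p.1).1, max (γ p.1).2 p.2)

/-- The strict order on paths: `γ₁ < γ₂` if at the least index `s` where they differ the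
first coordinate of `γ₁ s` is smaller than that of `γ₂ s`. -/
def pathLT (n k m : ℕ) (γ₁ γ₂ : Fin (m + 1) → Fin (n + 1) × Fin (k + 1)) : Prop :=
  ∃ s : Fin (m + 1), γ₁ s ≠ γ₂ s ∧ (∀ t : Fin (m + 1), t < s → γ₁ t = γ₂ t) ∧
    (γ₁ s).1 < (γ₂ s).1

lemma isPath_sum {n k m : ℕ} {γ : Fin (m + 1) → Fin (n + 1) × Fin (k + 1)}
    (hγ : IsPath n k m γ) (t : Fin (m + 1)) :
    ((γ t).1 : ℕ) + ((γ t).2 : ℕ) = (t : ℕ) := by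
  induction t using Fin.induction with
  | zero => simp [hγ.1]
  | succ i ih =>
    have hc := Fin.coe_castSucc i
    have hs := Fin.val_succ i
    rcases hγ.2.2 i with ⟨h1, h2⟩ | ⟨h1, h2⟩
    · have h2' := congrArg Fin.val h2
      omega
    · have h1' := congrArg Fin.val h1
      omega

lemma isPath_fst_mono {n k m : ℕ} {γ : Fin (m + 1) → Fin (n + 1) × Fin (k + 1)}
    (hγ : IsPath n k m γ) : Monotone fun t => ((γ t).1 : ℕ) := by
  refine Fin.monotone_iff_le_succ.mpr fun i => ?_
  rcases hγ.2.2 i with ⟨h1, h2⟩ | ⟨h1, h2⟩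
  · show ((γ i.castSucc).1 : ℕ) ≤ ((γ i.succ).1 : ℕ)
    omega
  · have h1' := congrArg Fin.val h1
    show ((γ i.castSucc).1 : ℕ) ≤ ((γ i.succ).1 : ℕ)
    omega

lemma isPath_snd_mono {n k m : ℕ} {γ : Fin (m + 1) → Fin (n + 1) × Fin (k + 1)}
    (hγ : IsPath n k m γ) : Monotone fun t => ((γ t).2 : ℕ) := by
  refine Fin.monotone_iff_le_succ.mpr fun i => ?_
  rcases hγ.2.2 i with ⟨h1, h2⟩ | ⟨h1, h2⟩
  · have h2' := congrArg Fin.val h2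
    show ((γ i.castSucc).2 : ℕ) ≤ ((γ i.succ).2 : ℕ)
    omega
  · show ((γ i.castSucc).2 : ℕ) ≤ ((γ i.succ).2 : ℕ)
    omega

/-- Auxiliary path construction: `C` horizontal steps, then `m` vertical steps,
then the remaining horizontal steps. -/
def tauAux (l m : ℕ) (cst : Fin (l + 1)) : Fin (l + m + 1) → Fin (l + 1) × Fin (m + 1) :=
  fun i =>
    if h : (i : ℕ) ≤ (cst : ℕ) then (⟨(i : ℕ), by have := cst.isLt; omega⟩, 0)
    else if h' : (i : ℕ) ≤ (cst : ℕ) + m then (cst, ⟨(i : ℕ) - (cst : ℕ), by omega⟩)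
    else (⟨(i : ℕ) - m, by have := i.isLt; omega⟩, Fin.last m)

lemma tauAux_1 (l m : ℕ) (cst : Fin (l + 1)) (i : Fin (l + m + 1))
    (h : (i : ℕ) ≤ (cst : ℕ)) :
    tauAux l m cst i = (⟨(i : ℕ), by have := cst.isLt; omega⟩, 0) := by
  unfold tauAux
  rw [dif_pos h]

lemma tauAux_2 (l m : ℕ) (cst : Fin (l + 1)) (i : Fin (l + m + 1))
    (h1 : ¬ (i : ℕ) ≤ (cst : ℕ)) (h2 : (i : ℕ) ≤ (cst : ℕ) + m) :
    tauAux l m cst i = (cst, ⟨(i : ℕ) - (cst : ℕ), by omega⟩) := by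
  unfold tauAux
  rw [dif_neg h1, dif_pos h2]

lemma tauAux_3 (l m : ℕ) (cst : Fin (l + 1)) (i : Fin (l + m + 1))
    (h1 : ¬ (i : ℕ) ≤ (cst : ℕ) + m) :
    tauAux l m cst i = (⟨(i : ℕ) - m, by have := i.isLt; omega⟩, Fin.last m) := by
  unfold tauAux
  rw [dif_neg (show ¬ (i : ℕ) ≤ (cst : ℕ) from by omega), dif_neg h1]

/-- Auxiliary monotone surjection collapsing the vertical climb. -/
def sAux (l m C d0 e : ℕ) (hCl : C ≤ l) (he : e = m + 1 - d0) :
    Fin (l + m + 1) → Fin (l + e + 1) :=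
  fun i =>
    if h : (i : ℕ) ≤ C then ⟨(i : ℕ), by omega⟩
    else if h' : (i : ℕ) ≤ C + m then ⟨C + ((i : ℕ) - C + 1 - d0), by omega⟩
    else ⟨(i : ℕ) - m + e, by have := i.isLt; omega⟩

lemma sAux_1 (l m C d0 e : ℕ) (hCl : C ≤ l) (he : e = m + 1 - d0) (i : Fin (l + m + 1))
    (h : (i : ℕ) ≤ C) : sAux l m C d0 e hCl he i = ⟨(i : ℕ), by omega⟩ := by
  unfold sAux
  rw [dif_pos h]

lemma sAux_2 (l m C d0 e : ℕ) (hCl : C ≤ l) (he : e = m + 1 - d0) (i : Fin (l + m + 1))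
    (h1 : ¬ (i : ℕ) ≤ C) (h2 : (i : ℕ) ≤ C + m) :
    sAux l m C d0 e hCl he i = ⟨C + ((i : ℕ) - C + 1 - d0), by omega⟩ := by
  unfold sAux
  rw [dif_neg h1, dif_pos h2]

lemma sAux_3 (l m C d0 e : ℕ) (hCl : C ≤ l) (he : e = m + 1 - d0) (i : Fin (l + m + 1))
    (h1 : ¬ (i : ℕ) ≤ C + m) :
    sAux l m C d0 e hCl he i = ⟨(i : ℕ) - m + e, by have := i.isLt; omega⟩ := by
  unfold sAux
  rw [dif_neg (show ¬ (i : ℕ) ≤ C from by omega), dif_neg h1]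

/-- Auxiliary injective monotone map: `α` with the tail of the vertical run of `γ`
inserted. -/
def ahAux (n k l C e aE d0 : ℕ) (α : Fin (l + 1) → Fin (n + k + 1)) (βv : ℕ → ℕ)
    (hCl : C ≤ l) (hbd : ∀ d : ℕ, aE + βv d < n + k + 1) :
    Fin (l + e + 1) → Fin (n + k + 1) :=
  fun x =>
    if h : (x : ℕ) ≤ C then α ⟨(x : ℕ), by omega⟩
    else if h' : (x : ℕ) ≤ C + e then ⟨aE + βv (d0 - 1 + ((x : ℕ) - C)), hbd _⟩
    else α ⟨(x : ℕ) - e, by have := x.isLt; omega⟩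

lemma ahAux_1 (n k l C e aE d0 : ℕ) (α : Fin (l + 1) → Fin (n + k + 1)) (βv : ℕ → ℕ)
    (hCl : C ≤ l) (hbd : ∀ d : ℕ, aE + βv d < n + k + 1) (x : Fin (l + e + 1))
    (h : (x : ℕ) ≤ C) :
    ahAux n k l C e aE d0 α βv hCl hbd x = α ⟨(x : ℕ), by omega⟩ := by
  unfold ahAux
  rw [dif_pos h]

lemma ahAux_2 (n k l C e aE d0 : ℕ) (α : Fin (l + 1) → Fin (n + k + 1)) (βv : ℕ → ℕ)
    (hCl : C ≤ l) (hbd : ∀ d : ℕ, aE + βv d < n + k + 1) (x : Fin (l + e + 1))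
    (h1 : ¬ (x : ℕ) ≤ C) (h2 : (x : ℕ) ≤ C + e) :
    ahAux n k l C e aE d0 α βv hCl hbd x = ⟨aE + βv (d0 - 1 + ((x : ℕ) - C)), hbd _⟩ := by
  unfold ahAux
  rw [dif_neg h1, dif_pos h2]

lemma ahAux_3 (n k l C e aE d0 : ℕ) (α : Fin (l + 1) → Fin (n + k + 1)) (βv : ℕ → ℕ)
    (hCl : C ≤ l) (hbd : ∀ d : ℕ, aE + βv d < n + k + 1) (x : Fin (l + e + 1))
    (h1 : ¬ (x : ℕ) ≤ C + e) :
    ahAux n k l C e aE d0 α βv hCl hbd x = α ⟨(x : ℕ) - e, by have := x.isLt; omega⟩ := by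
  unfold ahAux
  rw [dif_neg (show ¬ (x : ℕ) ≤ C from by omega), dif_neg h1]

set_option maxHeartbeats 2000000 in
/-- Let `γ` be a path in `[n] × [k]`, `0 < r ≤ k`, `ε_r` the least index with `b_{ε_r} = r`,
and `u_r` the least index with `a_{u_r} = a_{ε_r}`.  Given injective monotone maps
`α : [ℓ] → [n+k]` and `β : [m] → [k]` satisfying the stated conditions, there exist `p ≥ 0`,
a path `τ` in `[ℓ] × [m]`, a surjective monotone map `s : [ℓ+m] → [ℓ+p]`, and an injective
monotone map `α̂ : [ℓ+p] → [n+k]` whose image contains `ε_r` and the image of `α`, such that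
`E_γ ((α × β) (E_τ (i, j))) = E_γ (α̂ (s i), β j)` for all `(i, j)`. -/
theorem pathExt_no_boundaries (n k l m r : ℕ) (hr : 0 < r) (hrk : r ≤ k)
    (γ : Fin (n + k + 1) → Fin (n + 1) × Fin (k + 1)) (hγ : IsPath n k (n + k) γ)
    (εr : Fin (n + k + 1))
    (hε : ((γ εr).2 : ℕ) = r ∧ ∀ t : Fin (n + k + 1), ((γ t).2 : ℕ) = r → εr ≤ t)
    (ur : Fin (n + k + 1))
    (hu : (γ ur).1 = (γ εr).1 ∧ ∀ t : Fin (n + k + 1), (γ t).1 = (γ εr).1 → ur ≤ t)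
    (α : Fin (l + 1) → Fin (n + k + 1)) (hαm : Monotone α) (hαi : Function.Injective α)
    (β : Fin (m + 1) → Fin (k + 1)) (hβm : Monotone β) (hβi : Function.Injective β)
    (h1 : ∀ x, α x ≠ εr)
    (h2 : ∃ x, α x = 0)
    (h3 : εr ≠ Fin.last (n + k) → ∃ x, α x = Fin.last (n + k))
    (h4 : ∃ x, ur ≤ α x ∧ α x < εr)
    (h5 : (∃ y, β y = 0) ∧ (∃ y, ((β y) : ℕ) = r))
    (h6 : ∀ y, ((β y) : ℕ) ≤ r) :
    ∃ (p : ℕ) (τ : Fin (l + m + 1) → Fin (l + 1) × Fin (m + 1))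
      (s : Fin (l + m + 1) → Fin (l + p + 1))
      (αhat : Fin (l + p + 1) → Fin (n + k + 1)),
      IsPath l m (l + m) τ ∧
      Monotone s ∧ Function.Surjective s ∧
      Monotone αhat ∧ Function.Injective αhat ∧
      (∃ x, αhat x = εr) ∧
      (∀ x, ∃ y, αhat y = α x) ∧
      (∀ (i : Fin (l + m + 1)) (j : Fin (m + 1)),
        pathExt n k (n + k) γ
            (α (pathExt l m (l + m) τ (i, j)).1, β (pathExt l m (l + m) τ (i, j)).2) =
          pathExt n k (n + k) γ (αhat (s i), β j)) := by
  classical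
  obtain ⟨x0, hx0u, hx0e⟩ := h4
  obtain ⟨⟨y0, hy0⟩, ⟨y1, hy1⟩⟩ := h5
  have hαs : StrictMono α := hαm.strictMono_of_injective hαi
  have hβs : StrictMono β := hβm.strictMono_of_injective hβi
  have hsum : ∀ t : Fin (n + k + 1), ((γ t).1 : ℕ) + ((γ t).2 : ℕ) = (t : ℕ) :=
    isPath_sum hγ
  have hA : ∀ t t' : Fin (n + k + 1), (t : ℕ) ≤ (t' : ℕ) →
      ((γ t).1 : ℕ) ≤ ((γ t').1 : ℕ) := fun t t' h => isPath_fst_mono hγ (Fin.le_def.mpr h)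
  have hB : ∀ t t' : Fin (n + k + 1), (t : ℕ) ≤ (t' : ℕ) →
      ((γ t).2 : ℕ) ≤ ((γ t').2 : ℕ) := fun t t' h => isPath_snd_mono hγ (Fin.le_def.mpr h)
  -- basic values
  obtain ⟨aE, haE⟩ : ∃ z : ℕ, z = ((γ εr).1 : ℕ) := ⟨_, rfl⟩
  have hEsum : aE + r = (εr : ℕ) := by
    have h9 := hsum εr
    rw [hε.1] at h9
    omega
  have hEnk : (εr : ℕ) ≤ n + k := εr.is_le
  have hεle : ∀ t : Fin (n + k + 1), ((γ t).2 : ℕ) = r → (εr : ℕ) ≤ (t : ℕ) :=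
    fun t ht => Fin.le_def.mp (hε.2 t ht)
  have hblt : ∀ t : Fin (n + k + 1), (t : ℕ) < (εr : ℕ) → ((γ t).2 : ℕ) < r := by
    intro t ht
    have l1 := hB t εr (by omega)
    have l2 : ((γ t).2 : ℕ) ≠ r := fun hh => by have := hεle t hh; omega
    have l3 := hε.1
    omega
  have hbge : ∀ t : Fin (n + k + 1), (εr : ℕ) ≤ (t : ℕ) → r ≤ ((γ t).2 : ℕ) := by
    intro t ht
    have l1 := hB εr t ht
    have l2 := hε.1
    omega
  have hu1v : ((γ ur).1 : ℕ) = aE := by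
    rw [haE]
    exact congrArg (fun z : Fin (n + 1) => (z : ℕ)) hu.1
  have hAint : ∀ t : Fin (n + k + 1), (ur : ℕ) ≤ (t : ℕ) → (t : ℕ) ≤ (εr : ℕ) →
      ((γ t).1 : ℕ) = aE := by
    intro t ht1 ht2
    have l1 := hA ur t ht1
    have l2 := hA t εr ht2
    omega
  have hmid : ∀ t : Fin (n + k + 1), (ur : ℕ) ≤ (t : ℕ) → (t : ℕ) ≤ (εr : ℕ) →
      ((γ t).1 : ℕ) = aE ∧ ((γ t).2 : ℕ) = (t : ℕ) - aE := by
    intro t ht1 ht2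
    have l1 := hAint t ht1 ht2
    have l2 := hsum t
    exact ⟨l1, by omega⟩
  -- the pivot index cs
  have hne : (Finset.univ.filter fun x : Fin (l + 1) => α x < εr).Nonempty :=
    ⟨x0, Finset.mem_filter.mpr ⟨Finset.mem_univ _, hx0e⟩⟩
  obtain ⟨cs, hcsdef⟩ : ∃ z : Fin (l + 1),
      z = (Finset.univ.filter fun x : Fin (l + 1) => α x < εr).max' hne := ⟨_, rfl⟩
  have hcs1 : α cs < εr := by
    have h9 := (Finset.univ.filter fun x : Fin (l + 1) => α x < εr).max'_mem hne
    rw [← hcsdef] at h9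
    exact (Finset.mem_filter.mp h9).2
  have hcs2 : ∀ x : Fin (l + 1), α x < εr → x ≤ cs := by
    intro x hx
    rw [hcsdef]
    exact Finset.le_max' _ x (Finset.mem_filter.mpr ⟨Finset.mem_univ _, hx⟩)
  have hCl : (cs : ℕ) ≤ l := cs.is_le
  have hcsle : ∀ z : Fin (l + 1), (z : ℕ) ≤ (cs : ℕ) → (α z : ℕ) ≤ (α cs : ℕ) :=
    fun z hz => Fin.le_def.mp (hαm (Fin.le_def.mpr hz))
  have hcs3 : ∀ z : Fin (l + 1), (cs : ℕ) < (z : ℕ) → (εr : ℕ) < (α z : ℕ) := by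
    intro z hz
    have hnl : ¬ α z < εr := fun hh => by
      have := Fin.le_def.mp (hcs2 z hh)
      omega
    have hge : (εr : ℕ) ≤ (α z : ℕ) := Fin.le_def.mp (not_lt.mp hnl)
    have hne2 : (α z : ℕ) ≠ (εr : ℕ) := fun hh => h1 z (Fin.ext hh)
    omega
  have hurC : (ur : ℕ) ≤ (α cs : ℕ) := by
    have l1 := Fin.le_def.mp hx0u
    have l2 := Fin.le_def.mp (hαm (hcs2 x0 hx0e))
    omega
  have hcsE : (α cs : ℕ) < (εr : ℕ) := Fin.lt_def.mp hcs1
  have hACs : ((γ (α cs)).1 : ℕ) = aE := hAint _ hurC (by omega)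
  obtain ⟨b0, hb0⟩ : ∃ z : ℕ, z = ((γ (α cs)).2 : ℕ) := ⟨_, rfl⟩
  have hαcs : (α cs : ℕ) = aE + b0 := by
    have := hsum (α cs)
    omega
  have hb0r : b0 < r := by
    have := hblt (α cs) hcsE
    omega
  -- β on ℕ
  have hy0v : ((β y0) : ℕ) = 0 := by
    have := congrArg Fin.val hy0
    simpa using this
  have hβz : ((β (0 : Fin (m + 1))) : ℕ) = 0 := by
    have := Fin.le_def.mp (hβm (Fin.zero_le y0))
    omega
  have hβlastr : ((β (Fin.last m)) : ℕ) = r := by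
    have l1 := Fin.le_def.mp (hβm (Fin.le_last y1))
    have l2 := h6 (Fin.last m)
    omega
  obtain ⟨βv, hβveq, hβvler⟩ : ∃ f : ℕ → ℕ,
      (∀ x : Fin (m + 1), f (x : ℕ) = ((β x) : ℕ)) ∧ (∀ d : ℕ, f d ≤ r) :=
    ⟨fun d => ((β ⟨min d m, Nat.lt_succ_of_le (min_le_right d m)⟩) : ℕ), fun x =>
      congrArg (fun y : Fin (m + 1) => ((β y) : ℕ))
        (Fin.ext (by have := x.is_le; simp only [Fin.val_mk]; omega)),
      fun d => h6 _⟩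
  have hβvv : ∀ (d : ℕ) (hd : d ≤ m), βv d = ((β (⟨d, by omega⟩ : Fin (m + 1))) : ℕ) := by
    intro d hd
    have h9 := hβveq ⟨d, by omega⟩
    simpa only [Fin.val_mk] using h9
  have hβvmle : ∀ d d' : ℕ, d ≤ d' → d' ≤ m → βv d ≤ βv d' := by
    intro d d' h h'
    rw [hβvv d (by omega), hβvv d' h']
    exact Fin.le_def.mp (hβm (Fin.mk_le_mk.mpr h))
  have hβvslt : ∀ d d' : ℕ, d < d' → d' ≤ m → βv d < βv d' := by
    intro d d' h h'
    rw [hβvv d (by omega), hβvv d' h']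
    exact Fin.lt_def.mp (hβs (Fin.mk_lt_mk.mpr h))
  have hβvm : βv m = r := by
    rw [hβvv m le_rfl]
    calc ((β (⟨m, by omega⟩ : Fin (m + 1))) : ℕ)
        = ((β (Fin.last m)) : ℕ) :=
          congrArg (fun y : Fin (m + 1) => ((β y) : ℕ)) (Fin.ext (by simp))
      _ = r := hβlastr
  have hβv0 : βv 0 = 0 := by
    rw [hβvv 0 (by omega)]
    calc ((β (⟨0, by omega⟩ : Fin (m + 1))) : ℕ)
        = ((β (0 : Fin (m + 1))) : ℕ) :=
          congrArg (fun y : Fin (m + 1) => ((β y) : ℕ)) (Fin.ext (by simp))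
      _ = 0 := hβz
  -- d0 : least d with βv d > b0
  have hdex : ∃ d, b0 < βv d := ⟨m, by rw [hβvm]; omega⟩
  obtain ⟨d0, hd0def⟩ : ∃ z : ℕ, z = Nat.find hdex := ⟨_, rfl⟩
  have hd0spec : b0 < βv d0 := by
    rw [hd0def]
    exact Nat.find_spec hdex
  have hd0min : ∀ d : ℕ, d < d0 → βv d ≤ b0 := by
    intro d hd
    rw [hd0def] at hd
    exact not_lt.mp (Nat.find_min hdex hd)
  have hd0m : d0 ≤ m := by
    rw [hd0def]
    exact Nat.find_le (by rw [hβvm]; omega)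
  have hd01 : 1 ≤ d0 := by
    by_contra hcon
    have h0 : d0 = 0 := by omega
    rw [h0, hβv0] at hd0spec
    omega
  obtain ⟨e, he⟩ : ∃ z : ℕ, z = m + 1 - d0 := ⟨_, rfl⟩
  have he1 : 1 ≤ e := by omega
  have hbd : ∀ d : ℕ, aE + βv d < n + k + 1 := by
    intro d
    have := hβvler d
    omega
  -- helper lemmas about values
  have hwork : ∀ z : Fin (l + 1), (cs : ℕ) < (z : ℕ) →
      max ((γ (α z)).2 : ℕ) r = ((γ (α z)).2 : ℕ) := by
    intro z hz
    have l1 := hcs3 z hz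
    have l2 := hbge (α z) (by omega)
    omega
  have hlow : ∀ z : Fin (l + 1), (z : ℕ) ≤ (cs : ℕ) → ∀ w : ℕ, b0 < w →
      (α z : ℕ) < aE + w := by
    intro z hz w hw
    have := hcsle z hz
    omega
  have hhigh : ∀ z : Fin (l + 1), (cs : ℕ) < (z : ℕ) → ∀ w : ℕ, w ≤ r →
      aE + w < (α z : ℕ) := by
    intro z hz w hw
    have := hcs3 z hz
    omega
  have hvmax : ∀ u v : Fin (k + 1), ((max u v : Fin (k + 1)) : ℕ) = max (u : ℕ) (v : ℕ) := by
    intro u v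
    rcases le_total u v with h | h
    · rw [max_eq_right h, max_eq_right (Fin.le_def.mp h)]
    · rw [max_eq_left h, max_eq_left (Fin.le_def.mp h)]
  -- the three functions, as opaque data
  obtain ⟨τ, hτ1, hτ2, hτ3⟩ : ∃ τ : Fin (l + m + 1) → Fin (l + 1) × Fin (m + 1),
      (∀ (i : Fin (l + m + 1)) (h : (i : ℕ) ≤ (cs : ℕ)),
        τ i = (⟨(i : ℕ), by have := cs.isLt; omega⟩, 0)) ∧
      (∀ (i : Fin (l + m + 1)) (h1 : ¬ (i : ℕ) ≤ (cs : ℕ)) (h2 : (i : ℕ) ≤ (cs : ℕ) + m),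
        τ i = (cs, ⟨(i : ℕ) - (cs : ℕ), by omega⟩)) ∧
      (∀ (i : Fin (l + m + 1)) (h1 : ¬ (i : ℕ) ≤ (cs : ℕ) + m),
        τ i = (⟨(i : ℕ) - m, by have := i.isLt; omega⟩, Fin.last m)) :=
    ⟨tauAux l m cs, tauAux_1 l m cs, tauAux_2 l m cs, tauAux_3 l m cs⟩
  obtain ⟨s, hs1, hs2, hs3⟩ : ∃ s : Fin (l + m + 1) → Fin (l + e + 1),
      (∀ (i : Fin (l + m + 1)) (h : (i : ℕ) ≤ (cs : ℕ)), s i = ⟨(i : ℕ), by omega⟩) ∧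
      (∀ (i : Fin (l + m + 1)) (h1 : ¬ (i : ℕ) ≤ (cs : ℕ)) (h2 : (i : ℕ) ≤ (cs : ℕ) + m),
        s i = ⟨(cs : ℕ) + ((i : ℕ) - (cs : ℕ) + 1 - d0), by omega⟩) ∧
      (∀ (i : Fin (l + m + 1)) (h1 : ¬ (i : ℕ) ≤ (cs : ℕ) + m),
        s i = ⟨(i : ℕ) - m + e, by have := i.isLt; omega⟩) :=
    ⟨sAux l m (cs : ℕ) d0 e hCl he, sAux_1 l m (cs : ℕ) d0 e hCl he,
      sAux_2 l m (cs : ℕ) d0 e hCl he, sAux_3 l m (cs : ℕ) d0 e hCl he⟩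
  obtain ⟨ah, hah1, hah2, hah3⟩ : ∃ ah : Fin (l + e + 1) → Fin (n + k + 1),
      (∀ (x : Fin (l + e + 1)) (h : (x : ℕ) ≤ (cs : ℕ)), ah x = α ⟨(x : ℕ), by omega⟩) ∧
      (∀ (x : Fin (l + e + 1)) (h1 : ¬ (x : ℕ) ≤ (cs : ℕ)) (h2 : (x : ℕ) ≤ (cs : ℕ) + e),
        ah x = ⟨aE + βv (d0 - 1 + ((x : ℕ) - (cs : ℕ))), hbd _⟩) ∧
      (∀ (x : Fin (l + e + 1)) (h1 : ¬ (x : ℕ) ≤ (cs : ℕ) + e),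
        ah x = α ⟨(x : ℕ) - e, by have := x.isLt; omega⟩) :=
    ⟨ahAux n k l (cs : ℕ) e aE d0 α βv hCl hbd, ahAux_1 n k l (cs : ℕ) e aE d0 α βv hCl hbd,
      ahAux_2 n k l (cs : ℕ) e aE d0 α βv hCl hbd, ahAux_3 n k l (cs : ℕ) e aE d0 α βv hCl hbd⟩
  -- value description of s
  have hsv : ∀ i : Fin (l + m + 1), ((s i : ℕ)) =
      if (i : ℕ) ≤ (cs : ℕ) then (i : ℕ)
      else if (i : ℕ) ≤ (cs : ℕ) + m then (cs : ℕ) + ((i : ℕ) - (cs : ℕ) + 1 - d0)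
      else (i : ℕ) - m + e := by
    intro i
    by_cases a1 : (i : ℕ) ≤ (cs : ℕ)
    · rw [hs1 i a1, if_pos a1]
    · by_cases a2 : (i : ℕ) ≤ (cs : ℕ) + m
      · rw [hs2 i a1 a2, if_neg a1, if_pos a2]
      · rw [hs3 i a2, if_neg a1, if_neg a2]
  -- strict monotonicity of ah
  have hahs : StrictMono ah := by
    intro x y hxy
    have hxy' : (x : ℕ) < (y : ℕ) := Fin.lt_def.mp hxy
    have hx := x.isLt
    have hy := y.isLt
    rw [Fin.lt_def]
    by_cases a1 : (x : ℕ) ≤ (cs : ℕ)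
    · by_cases b1 : (y : ℕ) ≤ (cs : ℕ)
      · rw [hah1 x a1, hah1 y b1]
        exact Fin.lt_def.mp (hαs (Fin.mk_lt_mk.mpr hxy'))
      · by_cases b2 : (y : ℕ) ≤ (cs : ℕ) + e
        · rw [hah1 x a1, hah2 y b1 b2]
          simp only [Fin.val_mk]
          exact hlow _ a1 _ (by
            have := hβvmle d0 (d0 - 1 + ((y : ℕ) - (cs : ℕ))) (by omega) (by omega)
            omega)
        · rw [hah1 x a1, hah3 y b2]
          exact Fin.lt_def.mp (hαs (Fin.mk_lt_mk.mpr (by omega)))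
    · by_cases a2 : (x : ℕ) ≤ (cs : ℕ) + e
      · by_cases b1 : (y : ℕ) ≤ (cs : ℕ)
        · exact absurd hxy' (by omega)
        · by_cases b2 : (y : ℕ) ≤ (cs : ℕ) + e
          · rw [hah2 x a1 a2, hah2 y b1 b2]
            simp only [Fin.val_mk]
            have := hβvslt (d0 - 1 + ((x : ℕ) - (cs : ℕ))) (d0 - 1 + ((y : ℕ) - (cs : ℕ)))
              (by omega) (by omega)
            omega
          · rw [hah2 x a1 a2, hah3 y b2]
            simp only [Fin.val_mk]
            exact hhigh _ (show (cs : ℕ) < (y : ℕ) - e from by omega) _ (hβvler _)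
      · have b2 : ¬ (y : ℕ) ≤ (cs : ℕ) + e := by omega
        rw [hah3 x a2, hah3 y b2]
        exact Fin.lt_def.mp (hαs (Fin.mk_lt_mk.mpr (by omega)))
  -- the per-index key computation
  have key : ∀ i : Fin (l + m + 1),
      ((γ (α (τ i).1)).1 : ℕ) = ((γ (ah (s i))).1 : ℕ) ∧
      max ((γ (α (τ i).1)).2 : ℕ) ((β (τ i).2) : ℕ) = ((γ (ah (s i))).2 : ℕ) := by
    intro i
    have hi := i.isLt
    by_cases q1 : (i : ℕ) ≤ (cs : ℕ)
    · rw [hτ1 i q1, hs1 i q1,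
        hah1 ⟨(i : ℕ), by omega⟩ (show ((i : ℕ)) ≤ (cs : ℕ) from q1)]
      dsimp only
      constructor
      · rfl
      · rw [hβz]
        exact max_eq_left (Nat.zero_le _)
    · by_cases q2 : (i : ℕ) ≤ (cs : ℕ) + m
      · rw [hτ2 i q1 q2, hs2 i q1 q2]
        dsimp only
        by_cases w1 : (i : ℕ) - (cs : ℕ) < d0
        · rw [hah1 ⟨(cs : ℕ) + ((i : ℕ) - (cs : ℕ) + 1 - d0), by omega⟩
            (show (cs : ℕ) + ((i : ℕ) - (cs : ℕ) + 1 - d0) ≤ (cs : ℕ) from by omega)]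
          simp only [Fin.val_mk]
          rw [show α (⟨(cs : ℕ) + ((i : ℕ) - (cs : ℕ) + 1 - d0), by omega⟩ : Fin (l + 1))
              = α cs from congrArg α (Fin.ext (by simp only [Fin.val_mk]; omega))]
          constructor
          · rfl
          · rw [← hβveq]
            simp only [Fin.val_mk]
            exact max_eq_left (by
              have := hd0min ((i : ℕ) - (cs : ℕ)) w1
              omega)
        · have h91 := hβvmle d0 ((i : ℕ) - (cs : ℕ)) (by omega) (by omega)
          have h92 := hβvler ((i : ℕ) - (cs : ℕ))
          rw [hah2 ⟨(cs : ℕ) + ((i : ℕ) - (cs : ℕ) + 1 - d0), by omega⟩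
            (show ¬ (cs : ℕ) + ((i : ℕ) - (cs : ℕ) + 1 - d0) ≤ (cs : ℕ) from by omega)
            (show (cs : ℕ) + ((i : ℕ) - (cs : ℕ) + 1 - d0) ≤ (cs : ℕ) + e from by omega)]
          simp only [Fin.val_mk]
          simp only [show d0 - 1 + ((cs : ℕ) + ((i : ℕ) - (cs : ℕ) + 1 - d0) - (cs : ℕ))
              = (i : ℕ) - (cs : ℕ) from by omega]
          constructor
          · refine hACs.trans ((hmid _ ?_ ?_).1).symm <;> (simp only [Fin.val_mk]; omega)
          · rw [← hβveq]
            simp only [Fin.val_mk]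
            refine Eq.trans ?_ ((hmid _ ?_ ?_).2).symm
            · simp only [Fin.val_mk]
              omega
            · simp only [Fin.val_mk]
              omega
            · simp only [Fin.val_mk]
              omega
      · rw [hτ3 i q2, hs3 i q2,
          hah3 ⟨(i : ℕ) - m + e, by omega⟩
            (show ¬ ((i : ℕ) - m + e ≤ (cs : ℕ) + e) from by omega)]
        simp only [Fin.val_mk]
        simp only [show (i : ℕ) - m + e - e = (i : ℕ) - m from by omega]
        constructor
        · trivial
        · rw [hβlastr]
          exact hwork _ (show (cs : ℕ) < (i : ℕ) - m from by omega)
  refine ⟨e, τ, s, ah, ⟨?_, ?_, ?_⟩, ?_, ?_, hahs.monotone, hahs.injective, ?_, ?_, ?_⟩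
  · -- τ 0 = (0,0)
    rw [hτ1 0 (by simp only [Fin.val_zero]; omega)]
    exact Prod.ext_iff.mpr ⟨Fin.ext (by simp only [Fin.val_mk, Fin.val_zero]), rfl⟩
  · -- τ last = (last l, last m)
    have hlv := Fin.val_last (l + m)
    by_cases w1 : ((Fin.last (l + m)) : ℕ) ≤ (cs : ℕ)
    · rw [hτ1 _ w1]
      refine Prod.ext_iff.mpr ⟨Fin.ext ?_, Fin.ext ?_⟩
      · simp only [Fin.val_mk, Fin.val_last]
        omega
      · simp only [Fin.val_zero, Fin.val_last]
        omega
    · by_cases w2 : ((Fin.last (l + m)) : ℕ) ≤ (cs : ℕ) + m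
      · rw [hτ2 _ w1 w2]
        refine Prod.ext_iff.mpr ⟨Fin.ext ?_, Fin.ext ?_⟩
        · simp only [Fin.val_last]
          omega
        · simp only [Fin.val_mk, Fin.val_last]
          omega
      · rw [hτ3 _ w2]
        refine Prod.ext_iff.mpr ⟨Fin.ext ?_, Fin.ext ?_⟩
        · simp only [Fin.val_mk, Fin.val_last]
          omega
        · rfl
  · -- steps of τ
    intro i
    have hi := i.isLt
    have hc : (i.castSucc : ℕ) = (i : ℕ) := Fin.coe_castSucc i
    have hsc : (i.succ : ℕ) = (i : ℕ) + 1 := Fin.val_succ i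
    by_cases a1 : (i : ℕ) + 1 ≤ (cs : ℕ)
    · rw [hτ1 i.castSucc (by omega), hτ1 i.succ (by omega)]
      dsimp only
      left
      constructor
      · (try simp only [Fin.val_mk]); omega
      · rfl
    · by_cases a2 : (i : ℕ) + 1 ≤ (cs : ℕ) + m
      · by_cases a3 : (i : ℕ) ≤ (cs : ℕ)
        · rw [hτ1 i.castSucc (by omega), hτ2 i.succ (by omega) (by omega)]
          dsimp only
          right
          constructor
          · exact Fin.ext (by (try simp only [Fin.val_mk, Fin.val_zero]); omega)
          · (try simp only [Fin.val_mk, Fin.val_zero]); omega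
        · rw [hτ2 i.castSucc (by omega) (by omega), hτ2 i.succ (by omega) (by omega)]
          dsimp only
          right
          exact ⟨rfl, by (try simp only [Fin.val_mk]); omega⟩
      · by_cases a3 : (i : ℕ) ≤ (cs : ℕ) + m
        · rw [hτ2 i.castSucc (by omega) (by omega), hτ3 i.succ (by omega)]
          dsimp only
          left
          constructor
          · (try simp only [Fin.val_mk]); omega
          · exact Fin.ext (by (try simp only [Fin.val_mk, Fin.val_last]); omega)
        · rw [hτ3 i.castSucc (by omega), hτ3 i.succ (by omega)]
          dsimp only
          left
          exact ⟨by (try simp only [Fin.val_mk]); omega, rfl⟩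
  · -- Monotone s
    intro x y hxy
    have h := Fin.le_def.mp hxy
    have hx := hsv x
    have hy := hsv y
    have hxl := x.isLt
    have hyl := y.isLt
    rw [Fin.le_def]
    split_ifs at hx hy <;> omega
  · -- Surjective s
    intro y
    have hyl := y.isLt
    by_cases w1 : (y : ℕ) ≤ (cs : ℕ)
    · refine ⟨⟨(y : ℕ), by omega⟩, Fin.ext ?_⟩
      rw [hsv]
      simp only [Fin.val_mk]
      split_ifs <;> omega
    · by_cases w2 : (y : ℕ) ≤ (cs : ℕ) + e
      · refine ⟨⟨(cs : ℕ) + (d0 - 1) + ((y : ℕ) - (cs : ℕ)), by omega⟩, Fin.ext ?_⟩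
        rw [hsv]
        simp only [Fin.val_mk]
        split_ifs <;> omega
      · refine ⟨⟨(y : ℕ) + m - e, by omega⟩, Fin.ext ?_⟩
        rw [hsv]
        simp only [Fin.val_mk]
        split_ifs <;> omega
  · -- εr is in the image of ah
    refine ⟨⟨(cs : ℕ) + e, by omega⟩, ?_⟩
    rw [hah2 ⟨(cs : ℕ) + e, by omega⟩ (show ¬ ((cs : ℕ) + e ≤ (cs : ℕ)) from by omega)
      (show (cs : ℕ) + e ≤ (cs : ℕ) + e from le_rfl)]
    apply Fin.ext
    simp only [Fin.val_mk]
    rw [show d0 - 1 + ((cs : ℕ) + e - (cs : ℕ)) = m from by omega, hβvm]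
    omega
  · -- the image of α is contained in the image of ah
    intro x
    have hx := x.isLt
    by_cases w : (x : ℕ) ≤ (cs : ℕ)
    · refine ⟨⟨(x : ℕ), by omega⟩, ?_⟩
      rw [hah1 ⟨(x : ℕ), by omega⟩ (show ((x : ℕ)) ≤ (cs : ℕ) from w)]
    · refine ⟨⟨(x : ℕ) + e, by omega⟩, ?_⟩
      rw [hah3 ⟨(x : ℕ) + e, by omega⟩ (show ¬ ((x : ℕ) + e ≤ (cs : ℕ) + e) from by omega)]
      exact congrArg α (Fin.ext (by simp only [Fin.val_mk]; omega))
  · -- the main compatibility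
    intro i j
    obtain ⟨k1, k2⟩ := key i
    simp only [pathExt]
    rw [Monotone.map_max hβm]
    refine Prod.ext_iff.mpr ⟨Fin.ext ?_, Fin.ext ?_⟩
    · exact k1
    · simp only [hvmax]
      omega
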